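/- If a directed network contains a negative-cost path between two sinks, then no state x with x_t = 0 at all sinks is admissible. Conversely, if all paths between sinks have nonnegative cost and each node has a path to a sink, the maximal state x̄̄_i = min distance to sinks is a well-defined admissible state with x̄̄_t = 0 at sinks. -/

import Mathlib

def arcCost {V : Type*} (γ : V → V → ℤ) (p : List V) : ℤ :=
  ((p.zip p.tail).map fun q => γ q.1 q.2).sum

def IsWalk {V : Type*} (A : V → V → Prop) (i j : V) (p : List V) : Prop :=
  p.Chain' A ∧ p.head? = some i ∧ p.getLast? = some j

def IsPath {V : Type*} (A : V → V → Prop) (i j : V) (p : List V) : Prop :=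
  IsWalk A i j p ∧ p.Nodup

/-- A directed circuit: a walk of at least one arc whose first and last nodes coincide. -/
def IsCircuit {V : Type*} (A : V → V → Prop) (p : List V) : Prop :=
  p.Chain' A ∧ 2 ≤ p.length ∧ p.head? = p.getLast?

lemma arcCost_cons_cons {V : Type*} (γ : V → V → ℤ) (a b : V) (l : List V) :
    arcCost γ (a :: b :: l) = γ a b + arcCost γ (b :: l) := by
  simp [arcCost]

lemma arcCost_split {V : Type*} (γ : V → V → ℤ) (x : V) (l2 : List V) :
    ∀ l1, arcCost γ (l1 ++ x :: l2) = arcCost γ (l1 ++ [x]) + arcCost γ (x :: l2)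
  | [] => by simp [arcCost]
  | [a] => by simp [arcCost_cons_cons, arcCost]
  | a :: c :: l1 => by
    have := arcCost_split γ x l2 (c :: l1)
    simp only [List.cons_append, arcCost_cons_cons] at *
    omega

lemma walk_bound {V : Type*} {A : V → V → Prop} {γ : V → V → ℤ} {x : V → ℤ}
    (hadm : ∀ a b, A a b → x a - x b ≤ γ a b) :
    ∀ p i j, IsWalk A i j p → x i - x j ≤ arcCost γ p
  | [], i, j, h => by simp [IsWalk] at h
  | [a], i, j, h => by
    obtain ⟨-, h1, h2⟩ := h
    simp at h1 h2
    subst h1; subst h2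
    simp [arcCost]
  | a :: b :: l, i, j, h => by
    obtain ⟨hc, h1, h2⟩ := h
    simp at h1
    subst h1
    rw [List.Chain', List.isChain_cons_cons] at hc
    have ih := walk_bound hadm (b :: l) b j
      ⟨hc.2, rfl, by rwa [List.getLast?_cons_cons] at h2⟩
    have := hadm _ _ hc.1
    rw [arcCost_cons_cons]
    omega

/-- if there is a negative-cost path between two sinks then no state
vanishing at the sinks is admissible; conversely, if all paths between sinks have
nonnegative cost, the shortest-distance-to-sink state `d` is admissible and vanishes at
the sinks. -/
theorem sink_paths_and_admissibility {V : Type*} (A : V → V → Prop)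
    (γ : V → V → ℤ) (T : Set V)
    (hcirc : ∀ c, IsCircuit A c → 0 < arcCost γ c) :
    ((∃ t ∈ T, ∃ t' ∈ T, ∃ p, IsPath A t t' p ∧ arcCost γ p < 0) →
      ∀ x : V → ℤ, (∀ t ∈ T, x t = 0) → ¬ ∀ a b, A a b → x a - x b ≤ γ a b) ∧
    ((∀ t ∈ T, ∀ t' ∈ T, ∀ p, IsPath A t t' p → 0 ≤ arcCost γ p) →
      ∀ d : V → ℤ,
        (∀ i, ∃ t ∈ T, ∃ p, IsPath A i t p ∧ arcCost γ p = d i) →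
        (∀ i, ∀ t ∈ T, ∀ p, IsPath A i t p → d i ≤ arcCost γ p) →
        (∀ a b, A a b → d a - d b ≤ γ a b) ∧ ∀ t ∈ T, d t = 0) := by
  constructor
  · rintro ⟨t, ht, t', ht', p, ⟨hw, -⟩, hneg⟩ x hx0 hadm
    have := walk_bound hadm p t t' hw
    rw [hx0 t ht, hx0 t' ht'] at this
    omega
  · intro hnn d hex hmin
    constructor
    · intro a b hab
      obtain ⟨t, ht, p, hp, hcost⟩ := hex b
      obtain ⟨⟨hchain, hhead, hlast⟩, hnd⟩ := hp
      obtain ⟨p₀, rfl⟩ : ∃ p₀, p = b :: p₀ := by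
        cases p with
        | nil => simp at hhead
        | cons c l => simp at hhead; subst hhead; exact ⟨l, rfl⟩
      by_cases hmem : a ∈ b :: p₀
      · -- split at a
        obtain ⟨u, w, hsplit⟩ := List.mem_iff_append.mp hmem
        have hnw : (a :: w).Nodup := by
          have : (a :: w).Sublist (b :: p₀) := by
            rw [hsplit]; exact (List.sublist_append_right u (a :: w))
          exact this.nodup hnd
        -- a :: p = (a :: u) ++ (a :: w)
        have heq : a :: b :: p₀ = (a :: u) ++ (a :: w) := by
          rw [hsplit]; simp
        have hchain2 : (a :: b :: p₀).Chain' A := List.isChain_cons_cons.mpr ⟨hab, hchain⟩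
        rw [heq] at hchain2
        rw [List.Chain', List.isChain_append] at hchain2
        obtain ⟨hc1, hc2, hc3⟩ := hchain2
        -- circuit c = (a :: u) ++ [a]
        have hcircuit : IsCircuit A ((a :: u) ++ [a]) := by
          refine ⟨?_, by simp, ?_⟩
          · rw [List.Chain', List.isChain_append]
            refine ⟨hc1, List.isChain_singleton a, ?_⟩
            intro y hy z hz
            simp at hz; subst hz
            exact hc3 y hy a (by simp)
          · rw [List.getLast?_concat]; rfl
        have hposc := hcirc _ hcircuit
        -- walk a :: w from a to t
        have hw2 : IsWalk A a t (a :: w) := by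
          refine ⟨hc2, rfl, ?_⟩
          rw [hsplit, List.getLast?_append_cons] at hlast
          exact hlast
        have hda := hmin a t ht (a :: w) ⟨hw2, hnw⟩
        have hsplitcost : arcCost γ ((a :: u) ++ (a :: w)) =
            arcCost γ ((a :: u) ++ [a]) + arcCost γ (a :: w) :=
          arcCost_split γ a w (a :: u)
        rw [← heq, arcCost_cons_cons, hcost] at hsplitcost
        omega
      · have hpath : IsPath A a t (a :: b :: p₀) := by
          refine ⟨⟨List.isChain_cons_cons.mpr ⟨hab, hchain⟩, rfl, ?_⟩, ?_⟩
          · rwa [List.getLast?_cons_cons]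
          · exact List.nodup_cons.mpr ⟨hmem, hnd⟩
        have := hmin a t ht _ hpath
        rw [arcCost_cons_cons, hcost] at this
        omega
    · intro t ht
      have h1 : d t ≤ 0 := by
        have := hmin t t ht [t] ⟨⟨List.isChain_singleton t, rfl, rfl⟩, List.nodup_singleton t⟩
        simpa [arcCost] using this
      obtain ⟨t', ht', p, hp, hcost⟩ := hex t
      have h2 := hnn t ht t' ht' p hp
      omega
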